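/- arXiv:2412.17122 — 4 statements merged into one kernel-verified Lean document; each statement's English description precedes it below -/
import Mathlib

section
/- Let A and B be 2×2 real symmetric matrices with all entries strictly positive, satisfying A₁₁ > A₂₂, B₁₁ > B₂₂, and A₁₁B₂₂ = A₂₂B₁₁. Let M = A⊗B (indexed 1..4 via (i,k) ↦ 2(i−1)+k). If the multiset of entries of row 2 of M, namely {A₁₁B₁₂, A₁₁B₂₂, A₁₂B₁₂, A₁₂B₂₂}, equals the multiset of entries of row 3 of M, namely {A₁₂B₁₁, A₁₂B₁₂, A₂₂B₁₁, A₂₂B₁₂}, then A₁₁/A₁₂ = B₁₁/B₁₂ and A₂₂/A₁₂ = B₂₂/B₁₂; consequently B = κ·A where κ = B₁₂/A₁₂ > 0. -/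
/-- Let `A`, `B` be `2 × 2` real symmetric matrices with strictly positive
entries, `A₁₁ > A₂₂`, `B₁₁ > B₂₂` and `A₁₁B₂₂ = A₂₂B₁₁`.  If the multiset of
entries of row 2 of `M = A ⊗ B`, namely `{A₁₁B₁₂, A₁₁B₂₂, A₁₂B₁₂, A₁₂B₂₂}`,
equals the multiset of entries of row 3, namely
`{A₁₂B₁₁, A₁₂B₁₂, A₂₂B₁₁, A₂₂B₁₂}`, then `A₁₁/A₁₂ = B₁₁/B₁₂`,
`A₂₂/A₁₂ = B₂₂/B₁₂`, and `B = κ • A` with `κ = B₁₂/A₁₂ > 0`. -/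
theorem statement7 (A B : Matrix (Fin 2) (Fin 2) ℝ)
    (hAs : A.IsSymm) (hBs : B.IsSymm)
    (hApos : ∀ i j, 0 < A i j) (hBpos : ∀ i j, 0 < B i j)
    (hAd : A 1 1 < A 0 0) (hBd : B 1 1 < B 0 0)
    (hcross : A 0 0 * B 1 1 = A 1 1 * B 0 0)
    (hrows : ({A 0 0 * B 0 1, A 0 0 * B 1 1, A 0 1 * B 0 1, A 0 1 * B 1 1} : Multiset ℝ) =
             ({A 0 1 * B 0 0, A 0 1 * B 0 1, A 1 1 * B 0 0, A 1 1 * B 0 1} : Multiset ℝ)) :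
    A 0 0 / A 0 1 = B 0 0 / B 0 1 ∧
    A 1 1 / A 0 1 = B 1 1 / B 0 1 ∧
    0 < B 0 1 / A 0 1 ∧
    B = (B 0 1 / A 0 1) • A := by
  have hA10 : A 1 0 = A 0 1 := (hAs.apply 1 0).symm
  have hB10 : B 1 0 = B 0 1 := (hBs.apply 1 0).symm
  set a := A 0 0 with ha
  set c := A 1 1 with hc
  set p := A 0 1 with hp
  set b := B 0 0 with hb
  set d := B 1 1 with hd
  set q := B 0 1 with hq
  have hap : 0 < a := hApos 0 0
  have hcp : 0 < c := hApos 1 1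
  have hpp : 0 < p := hApos 0 1
  have hbp : 0 < b := hBpos 0 0
  have hdp : 0 < d := hBpos 1 1
  have hqp : 0 < q := hBpos 0 1
  -- sum invariant
  have hsum : a*q + a*d + p*q + p*d = p*b + p*q + c*b + c*q := by
    have := congrArg Multiset.sum hrows
    simp at this
    linarith
  -- sum of squares invariant
  have hsq : (a*q)^2 + (a*d)^2 + (p*q)^2 + (p*d)^2
      = (p*b)^2 + (p*q)^2 + (c*b)^2 + (c*q)^2 := by
    have := congrArg (fun s : Multiset ℝ => (s.map (fun x => x^2)).sum) hrows
    simp at this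
    linarith
  -- membership of a*q in the right row
  have hmem : a*q = p*b ∨ a*q = p*q ∨ a*q = c*b ∨ a*q = c*q := by
    have : a*q ∈ ({p*b, p*q, c*b, c*q} : Multiset ℝ) := by
      rw [← hrows]; simp
    simpa using this
  have hkey : a*q = p*b ∧ p*d = c*q := by
    rcases hmem with h | h | h | h
    · exact ⟨h, by linarith⟩
    · -- a*q = p*q ⇒ a = p
      have hap' : a = p := mul_right_cancel₀ (ne_of_gt hqp) h
      have hpd : p*d = c*b := by rw [← hap']; exact hcross
      have e1 : p*q + p*d = p*b + c*q := by
        linear_combination hsum - q*hap' - hcross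
      have e2 : (p*q)^2 + (p*d)^2 = (p*b)^2 + (c*q)^2 := by
        linear_combination hsq - (a*q+p*q)*q*hap' - (a*d+c*b)*hcross
      have huv : (p*q) * (p*d) = (p*b) * (c*q) := by
        linear_combination ((p*q + p*d + p*b + c*q)/2) * e1 - (1/2) * e2
      have h0 : (p*q - p*b) * (p*q - c*q) = 0 := by
        linear_combination (p*q) * e1 - huv
      rcases mul_eq_zero.mp h0 with h1 | h1
      · have hqb : q = b := by
          have : p*q = p*b := by linarith
          exact mul_left_cancel₀ (ne_of_gt hpp) this
        exact ⟨by rw [hap', hqb], by linarith⟩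
      · have hpc : p = c := by
          have : q*p = q*c := by linarith [h1, mul_comm p q, mul_comm c q]
          exact mul_left_cancel₀ (ne_of_gt hqp) this
        exfalso
        have hdb : p*d = p*b := by rw [hpc] at e1 ⊢; linarith
        have : d = b := mul_left_cancel₀ (ne_of_gt hpp) hdb
        linarith
    · -- a*q = c*b ⇒ q = d
      have hqd : q = d := by
        have : a*q = a*d := by rw [h, hcross]
        exact mul_left_cancel₀ (ne_of_gt hap) this
      have h0 : (c^2 - p^2) * (b^2 - d^2) = 0 := by
        rw [hqd] at hsq h
        linear_combination hsq - 2*(a*d + c*b)*h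
      have hbd2 : d^2 < b^2 := by nlinarith
      have hcp2 : c^2 = p^2 := by
        rcases mul_eq_zero.mp h0 with h1 | h1
        · linarith
        · exfalso; linarith
      have hcep : c = p := by nlinarith [hcp2]
      constructor
      · rw [h, hcep]
      · rw [hqd, hcep]
    · exfalso
      have : a = c := mul_right_cancel₀ (ne_of_gt hqp) h
      linarith
  obtain ⟨h1, h2⟩ := hkey
  refine ⟨?_, ?_, div_pos hqp hpp, ?_⟩
  · rw [div_eq_div_iff (ne_of_gt hpp) (ne_of_gt hqp)]
    linarith
  · rw [div_eq_div_iff (ne_of_gt hpp) (ne_of_gt hqp)]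
    linarith
  · have e00 : b = q / p * a := by
      rw [div_mul_eq_mul_div, eq_div_iff (ne_of_gt hpp)]
      linarith
    have e01 : q = q / p * p := by
      field_simp
    have e11 : d = q / p * c := by
      rw [div_mul_eq_mul_div, eq_div_iff (ne_of_gt hpp)]
      linarith
    ext i j
    fin_cases i <;> fin_cases j <;>
      simp only [Matrix.smul_apply, smul_eq_mul, Fin.zero_eta, Fin.mk_one]
    · exact e00
    · exact e01
    · rw [hA10, hB10]; exact e01
    · exact e11
end

section
/- Let v₁, v₂ ∈ ℝ⁴ be orthonormal vectors (with respect to the standard inner product), each orthogonal to both (1,1,1,1) and (1,−1,−1,1). Then there exist u, v ∈ ℝ with u² + v² = 2 and ε ∈ {−1, 1} such that v₁ = ½(u, −v, v, −u) and v₂ = (ε/2)(v, u, −u, −v). -/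
/-- Let `v₁, v₂ ∈ ℝ⁴` be orthonormal vectors, each orthogonal to both
`(1,1,1,1)` and `(1,−1,−1,1)`.  Then there are `u, v ∈ ℝ` with `u² + v² = 2`
and a sign `ε ∈ {−1,1}` such that `v₁ = ½(u,−v,v,−u)` and
`v₂ = (ε/2)(v,u,−u,−v)`. -/
theorem statement9 (v₁ v₂ : Fin 4 → ℝ)
    (h1 : v₁ 0 ^ 2 + v₁ 1 ^ 2 + v₁ 2 ^ 2 + v₁ 3 ^ 2 = 1)
    (h2 : v₂ 0 ^ 2 + v₂ 1 ^ 2 + v₂ 2 ^ 2 + v₂ 3 ^ 2 = 1)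
    (h12 : v₁ 0 * v₂ 0 + v₁ 1 * v₂ 1 + v₁ 2 * v₂ 2 + v₁ 3 * v₂ 3 = 0)
    (ha1 : v₁ 0 + v₁ 1 + v₁ 2 + v₁ 3 = 0)
    (hb1 : v₁ 0 - v₁ 1 - v₁ 2 + v₁ 3 = 0)
    (ha2 : v₂ 0 + v₂ 1 + v₂ 2 + v₂ 3 = 0)
    (hb2 : v₂ 0 - v₂ 1 - v₂ 2 + v₂ 3 = 0) :
    ∃ u v ε : ℝ, u ^ 2 + v ^ 2 = 2 ∧ (ε = 1 ∨ ε = -1) ∧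
      v₁ = (1 / 2 : ℝ) • ![u, -v, v, -u] ∧
      v₂ = (ε / 2) • ![v, u, -u, -v] := by
  have e3 : v₁ 3 = -v₁ 0 := by linarith
  have e2 : v₁ 2 = -v₁ 1 := by linarith
  have f3 : v₂ 3 = -v₂ 0 := by linarith
  have f2 : v₂ 2 = -v₂ 1 := by linarith
  rw [e2, e3] at h1 h12
  rw [f2, f3] at h2 h12
  refine ⟨2 * v₁ 0, -2 * v₁ 1, 2 * (v₁ 0 * v₂ 1 - v₁ 1 * v₂ 0), by nlinarith, ?_, ?_, ?_⟩
  · rcases mul_self_eq_one_iff.mp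
      (show (2 * (v₁ 0 * v₂ 1 - v₁ 1 * v₂ 0)) * (2 * (v₁ 0 * v₂ 1 - v₁ 1 * v₂ 0)) = 1 by
        nlinarith [sq_nonneg (v₁ 0 * v₂ 0 + v₁ 1 * v₂ 1)]) with h | h
    · exact Or.inl h
    · exact Or.inr h
  · funext i
    fin_cases i <;> simp <;> linarith
  · funext i
    fin_cases i <;> simp
    · linear_combination (-(v₂ 0)) * h1 + v₁ 0 * h12
    · linear_combination (-(v₂ 1)) * h1 + v₁ 1 * h12
    · linear_combination f2 + v₂ 1 * h1 - v₁ 1 * h12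
    · linear_combination f3 + v₂ 0 * h1 - v₁ 0 * h12
end

section
/- Let M be a 4×4 real symmetric invertible matrix with all entries strictly positive. Suppose there is no permutation σ of {1,2,3,4} and no 2×2 real symmetric matrices A', B' with M_{σ(i)σ(j)} = (A'⊗B')_{ij} for all i,j. Suppose further that M² = A⊗B for some 2×2 real symmetric positive definite matrices A, B with all entries strictly positive satisfying A₁₁ = A₂₂ and B₁₁ = B₂₂. Then there exist u, v ∈ ℝ with u² + v² = 2, κ > 0, and x, y, z ∈ ℝ with 0 < |x|, |y|, |z| < 1 such that M = K·D·Kᵀ, where K is the 4×4 matrix with rows ½(1,u,v,1), ½(1,−v,u,−1), ½(1,v,−u,−1), ½(1,−u,−v,1) and D = κ·diag(1, x, y, z). Moreover: (1) if |x| ≠ |y| then u = v = 1 and z = −xy; (2) if x = y then z = −x²; (3) if x = −y then either z = x², or z = −x² and |u| ≠ |v|. -/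
open Matrix

/-- The Kronecker product of two `2 × 2` matrices as a `4 × 4` matrix, indexed
via the identification `(i,k) ↦ 2(i−1)+k` (1-based). -/
def kron4 (A B : Matrix (Fin 2) (Fin 2) ℝ) : Matrix (Fin 4) (Fin 4) ℝ :=
  fun i j =>
    A ⟨i.val / 2, by omega⟩ ⟨j.val / 2, by omega⟩ *
    B ⟨i.val % 2, by omega⟩ ⟨j.val % 2, by omega⟩

noncomputable def K0 : Matrix (Fin 4) (Fin 4) ℝ :=
  (1/2 : ℝ) • !![1,1,1,1; 1,-1,1,-1; 1,1,-1,-1; 1,-1,-1,1]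

lemma K0_mul_K0 : K0 * K0 = 1 := by
  ext i j
  fin_cases i <;> fin_cases j <;>
    simp [K0, Matrix.mul_apply, Fin.sum_univ_four, Matrix.one_apply,
      Matrix.vecHead, Matrix.vecTail] <;> norm_num

lemma K0_transpose : K0ᵀ = K0 := by
  ext i j
  fin_cases i <;> fin_cases j <;> simp [K0, Matrix.vecHead, Matrix.vecTail]

set_option maxHeartbeats 1000000 in
lemma kron4_diag (A B : Matrix (Fin 2) (Fin 2) ℝ) (a b c d : ℝ)
    (hA00 : A 0 0 = a) (hA11 : A 1 1 = a) (hA01 : A 0 1 = b) (hA10 : A 1 0 = b)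
    (hB00 : B 0 0 = c) (hB11 : B 1 1 = c) (hB01 : B 0 1 = d) (hB10 : B 1 0 = d) :
    kron4 A B = K0 * Matrix.diagonal ![(a+b)*(c+d), (a+b)*(c-d), (a-b)*(c+d), (a-b)*(c-d)] * K0 := by
  ext i j
  rw [Matrix.mul_assoc]
  fin_cases i <;> fin_cases j <;>
    simp [kron4, K0, Matrix.mul_apply, Matrix.diagonal_mul, Fin.sum_univ_four,
      Matrix.vecHead, Matrix.vecTail, hA00, hA11, hA01, hA10, hB00, hB11, hB01, hB10] <;>
    ring

set_option maxHeartbeats 2000000 in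
/-- Let `M` be a `4 × 4` real symmetric invertible matrix with strictly
positive entries that is not isomorphic (under any simultaneous permutation of
rows and columns) to a Kronecker product of `2 × 2` real symmetric matrices,
and suppose `M² = A ⊗ B` for `2 × 2` symmetric positive definite matrices
`A, B` with positive entries satisfying `A₁₁ = A₂₂`, `B₁₁ = B₂₂`.  Then
`M = K D Kᵀ` where `K` has rows `½(1,u,v,1)`, `½(1,−v,u,−1)`, `½(1,v,−u,−1)`,
`½(1,−u,−v,1)` with `u² + v² = 2`, and `D = κ·diag(1,x,y,z)` with `κ > 0` and
`0 < |x|,|y|,|z| < 1`; moreover (1) if `|x| ≠ |y|` then `u = v = 1` and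
`z = −xy`; (2) if `x = y` then `z = −x²`; (3) if `x = −y` then either `z = x²`,
or `z = −x²` and `|u| ≠ |v|`. -/
theorem statement10 (M : Matrix (Fin 4) (Fin 4) ℝ)
    (hMs : M.IsSymm) (hMdet : IsUnit M.det) (hMpos : ∀ i j, 0 < M i j)
    (hnotensor : ¬ ∃ (σ : Equiv.Perm (Fin 4)) (A' B' : Matrix (Fin 2) (Fin 2) ℝ),
      A'.IsSymm ∧ B'.IsSymm ∧ ∀ i j, M (σ i) (σ j) = kron4 A' B' i j)
    (A B : Matrix (Fin 2) (Fin 2) ℝ)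
    (hA : A.PosDef) (hB : B.PosDef)
    (hApos : ∀ i j, 0 < A i j) (hBpos : ∀ i j, 0 < B i j)
    (hAd : A 0 0 = A 1 1) (hBd : B 0 0 = B 1 1)
    (hM2 : M * M = kron4 A B) :
    ∃ u v κ x y z : ℝ, u ^ 2 + v ^ 2 = 2 ∧ 0 < κ ∧
      0 < |x| ∧ |x| < 1 ∧ 0 < |y| ∧ |y| < 1 ∧ 0 < |z| ∧ |z| < 1 ∧
      M = ((1 / 2 : ℝ) • !![1, u, v, 1; 1, -v, u, -1; 1, v, -u, -1; 1, -u, -v, 1]) *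
          (κ • Matrix.diagonal ![1, x, y, z]) *
          ((1 / 2 : ℝ) • !![1, u, v, 1; 1, -v, u, -1; 1, v, -u, -1; 1, -u, -v, 1])ᵀ ∧
      (|x| ≠ |y| → u = 1 ∧ v = 1 ∧ z = -(x * y)) ∧
      (x = y → z = -x ^ 2) ∧
      (x = -y → (z = x ^ 2 ∨ (z = -x ^ 2 ∧ |u| ≠ |v|))) := by
  -- entries of A and B
  obtain ⟨a, ha⟩ : ∃ x : ℝ, x = A 0 0 := ⟨_, rfl⟩
  obtain ⟨b, hb⟩ : ∃ x : ℝ, x = A 0 1 := ⟨_, rfl⟩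
  obtain ⟨c, hc⟩ : ∃ x : ℝ, x = B 0 0 := ⟨_, rfl⟩
  obtain ⟨d, hd⟩ : ∃ x : ℝ, x = B 0 1 := ⟨_, rfl⟩
  have hA00 : A 0 0 = a := ha.symm
  have hA01 : A 0 1 = b := hb.symm
  have hB00 : B 0 0 = c := hc.symm
  have hB01 : B 0 1 = d := hd.symm
  have hA11 : A 1 1 = a := by rw [← hAd, hA00]
  have hB11 : B 1 1 = c := by rw [← hBd, hB00]
  have hA10 : A 1 0 = b := by
    have h := congrFun (congrFun hA.1 0) 1
    simp [Matrix.conjTranspose_apply] at h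
    rw [h, hA01]
  have hB10 : B 1 0 = d := by
    have h := congrFun (congrFun hB.1 0) 1
    simp [Matrix.conjTranspose_apply] at h
    rw [h, hB01]
  have hapos : 0 < a := by rw [ha]; exact hApos 0 0
  have hbpos : 0 < b := by rw [hb]; exact hApos 0 1
  have hcpos : 0 < c := by rw [hc]; exact hBpos 0 0
  have hdpos : 0 < d := by rw [hd]; exact hBpos 0 1
  have hdetA : 0 < a * a - b * b := by
    have := hA.det_pos
    rwa [Matrix.det_fin_two, hA00, hA11, hA01, hA10] at this
  have hdetB : 0 < c * c - d * d := by
    have := hB.det_pos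
    rwa [Matrix.det_fin_two, hB00, hB11, hB01, hB10] at this
  have hba : b < a := by nlinarith
  have hdc : d < c := by nlinarith
  -- eigenvalues
  obtain ⟨l1, hl1⟩ : ∃ x : ℝ, x = (a+b)*(c+d) := ⟨_, rfl⟩
  obtain ⟨l2, hl2⟩ : ∃ x : ℝ, x = (a+b)*(c-d) := ⟨_, rfl⟩
  obtain ⟨l3, hl3⟩ : ∃ x : ℝ, x = (a-b)*(c+d) := ⟨_, rfl⟩
  obtain ⟨l4, hl4⟩ : ∃ x : ℝ, x = (a-b)*(c-d) := ⟨_, rfl⟩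
  have hl1pos : 0 < l1 := by rw [hl1]; positivity
  have hl2pos : 0 < l2 := by rw [hl2]; nlinarith
  have hl3pos : 0 < l3 := by rw [hl3]; nlinarith
  have hl4pos : 0 < l4 := by rw [hl4]; nlinarith
  have hl12 : l2 < l1 := by rw [hl1, hl2]; nlinarith
  have hl13 : l3 < l1 := by rw [hl1, hl3]; nlinarith
  have hl14 : l4 < l1 := by rw [hl1, hl4]; nlinarith
  have hl24 : l4 < l2 := by rw [hl2, hl4]; nlinarith
  have hl34 : l4 < l3 := by rw [hl3, hl4]; nlinarith
  have hl23 : l2 * l3 = l1 * l4 := by rw [hl1, hl2, hl3, hl4]; ring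
  -- diagonalization of kron4 A B
  have hKron : kron4 A B = K0 * Matrix.diagonal ![l1, l2, l3, l4] * K0 := by
    rw [hl1, hl2, hl3, hl4]
    exact kron4_diag A B a b c d hA00 hA11 hA01 hA10 hB00 hB11 hB01 hB10
  -- conjugated matrix N
  obtain ⟨N, hNdef⟩ : ∃ X : Matrix (Fin 4) (Fin 4) ℝ, X = K0 * M * K0 := ⟨_, rfl⟩
  have hMsymm : Mᵀ = M := hMs
  have hNsymm : Nᵀ = N := by
    rw [hNdef, Matrix.transpose_mul, Matrix.transpose_mul, K0_transpose, hMsymm,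
      Matrix.mul_assoc]
  have hMN : M = K0 * N * K0 := by
    rw [hNdef]
    rw [show K0 * (K0 * M * K0) * K0 = (K0 * K0) * M * (K0 * K0) by
      simp only [Matrix.mul_assoc], K0_mul_K0]
    simp
  have hN2 : N * N = Matrix.diagonal ![l1, l2, l3, l4] := by
    rw [hNdef]
    rw [show K0 * M * K0 * (K0 * M * K0) = K0 * M * (K0 * K0) * (M * K0) by
      simp only [Matrix.mul_assoc], K0_mul_K0]
    rw [show K0 * M * 1 * (M * K0) = K0 * (M * M) * K0 by
      simp only [Matrix.mul_one, Matrix.mul_assoc]]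
    rw [hM2, hKron]
    rw [show K0 * (K0 * Matrix.diagonal ![l1, l2, l3, l4] * K0) * K0
        = (K0 * K0) * Matrix.diagonal ![l1, l2, l3, l4] * (K0 * K0) by
      simp only [Matrix.mul_assoc], K0_mul_K0]
    simp
  have hcomm : ∀ i j, N i j * (![l1, l2, l3, l4] j) = (![l1, l2, l3, l4] i) * N i j := by
    intro i j
    have h : N * Matrix.diagonal ![l1, l2, l3, l4] = Matrix.diagonal ![l1, l2, l3, l4] * N := by
      rw [← hN2, ← Matrix.mul_assoc, Matrix.mul_assoc]
    have := congrFun (congrFun h i) j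
    rwa [Matrix.mul_diagonal, Matrix.diagonal_mul] at this
  -- vanishing off-diagonal entries
  have hzero : ∀ i j : Fin 4, ![l1,l2,l3,l4] i ≠ ![l1,l2,l3,l4] j → N i j = 0 := by
    intro i j hne
    have h := hcomm i j
    rcases mul_eq_zero.mp (show N i j * (![l1,l2,l3,l4] i - ![l1,l2,l3,l4] j) = 0 by
      linear_combination -h) with h' | h'
    · exact h'
    · exact absurd (by linarith [sub_eq_zero.mp h']) hne
  have h01 : N 0 1 = 0 := hzero 0 1 (by simp [Matrix.vecHead, Matrix.vecTail]; linarith)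
  have h02 : N 0 2 = 0 := hzero 0 2 (by simp [Matrix.vecHead, Matrix.vecTail]; linarith)
  have h03 : N 0 3 = 0 := hzero 0 3 (by simp [Matrix.vecHead, Matrix.vecTail]; linarith)
  have h13 : N 1 3 = 0 := hzero 1 3 (by simp [Matrix.vecHead, Matrix.vecTail]; linarith)
  have h23 : N 2 3 = 0 := hzero 2 3 (by simp [Matrix.vecHead, Matrix.vecTail]; linarith)
  have hsymmN : ∀ i j : Fin 4, N j i = N i j := by
    intro i j
    have := congrFun (congrFun hNsymm i) j
    rwa [Matrix.transpose_apply] at this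
  have h10 : N 1 0 = 0 := by rw [hsymmN 0 1]; exact h01
  have h20 : N 2 0 = 0 := by rw [hsymmN 0 2]; exact h02
  have h30 : N 3 0 = 0 := by rw [hsymmN 0 3]; exact h03
  have h31 : N 3 1 = 0 := by rw [hsymmN 1 3]; exact h13
  have h32 : N 3 2 = 0 := by rw [hsymmN 2 3]; exact h23
  have h21 : N 2 1 = N 1 2 := hsymmN 1 2
  -- squared-entry equations
  have hNsq : ∀ i j, (N * N) i j = Matrix.diagonal ![l1,l2,l3,l4] i j :=
    fun i j => congrFun (congrFun hN2 i) j
  have e00 : N 0 0 * N 0 0 = l1 := by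
    have := hNsq 0 0
    simpa [Matrix.mul_apply, Fin.sum_univ_four, h01, h02, h03, h10, h20, h30] using this
  have e11 : N 1 1 * N 1 1 + N 1 2 * N 1 2 = l2 := by
    have := hNsq 1 1
    simpa [Matrix.mul_apply, Fin.sum_univ_four, h10, h13, h01, h31, h21,
      Matrix.vecHead, Matrix.vecTail] using this
  have e12 : N 1 2 * (N 1 1 + N 2 2) = 0 := by
    have := hNsq 1 2
    simp [Matrix.mul_apply, Fin.sum_univ_four, h10, h13, h02, h32, h21,
      Matrix.diagonal_apply_ne] at this
    linear_combination this
  have e22 : N 1 2 * N 1 2 + N 2 2 * N 2 2 = l3 := by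
    have := hNsq 2 2
    simpa [Matrix.mul_apply, Fin.sum_univ_four, h20, h23, h02, h32, h21,
      Matrix.vecHead, Matrix.vecTail] using this
  have e33 : N 3 3 * N 3 3 = l4 := by
    have := hNsq 3 3
    simpa [Matrix.mul_apply, Fin.sum_univ_four, h30, h31, h32, h03, h13, h23,
      Matrix.vecHead, Matrix.vecTail] using this
  -- positivity of N 0 0
  have hn1pos : 0 < N 0 0 := by
    have hval : N 0 0 = (M 0 0 + M 0 1 + M 0 2 + M 0 3 + M 1 0 + M 1 1 + M 1 2 + M 1 3
        + M 2 0 + M 2 1 + M 2 2 + M 2 3 + M 3 0 + M 3 1 + M 3 2 + M 3 3) / 4 := by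
      rw [hNdef, Matrix.mul_assoc]
      simp [Matrix.mul_apply, Fin.sum_univ_four, K0, Matrix.vecHead, Matrix.vecTail]
      ring
    rw [hval]
    have h00 := hMpos 0 0; have h01' := hMpos 0 1; have h02' := hMpos 0 2; have h03' := hMpos 0 3
    have h10' := hMpos 1 0; have h11' := hMpos 1 1; have h12' := hMpos 1 2; have h13' := hMpos 1 3
    have h20' := hMpos 2 0; have h21' := hMpos 2 1; have h22' := hMpos 2 2; have h23' := hMpos 2 3
    have h30' := hMpos 3 0; have h31' := hMpos 3 1; have h32' := hMpos 3 2; have h33' := hMpos 3 3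
    linarith

  have hn1ne : N 0 0 ≠ 0 := ne_of_gt hn1pos
  have hn4ne : N 3 3 ≠ 0 := by
    intro h; rw [h] at e33; simp at e33; linarith
  by_cases hq : N 1 2 = 0
  · -- N is diagonal
    have hNd : N = Matrix.diagonal ![N 0 0, N 1 1, N 2 2, N 3 3] := by
      ext i j
      fin_cases i <;> fin_cases j <;>
        simp [h01, h02, h03, h10, h20, h30, h13, h23, h31, h32, hq, h21,
          Matrix.vecHead, Matrix.vecTail]
    have ep : N 1 1 * N 1 1 = l2 := by rw [hq] at e11; linarith [e11]
    have er : N 2 2 * N 2 2 = l3 := by rw [hq] at e22; linarith [e22]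
    have hpne : N 1 1 ≠ 0 := by intro h; rw [h] at ep; simp at ep; linarith
    have hrne : N 2 2 ≠ 0 := by intro h; rw [h] at er; simp at er; linarith
    have hsq : (N 1 1 * N 2 2 - N 0 0 * N 3 3) * (N 1 1 * N 2 2 + N 0 0 * N 3 3) = 0 := by
      linear_combination (N 2 2 * N 2 2) * ep + l2 * er - (N 3 3 * N 3 3) * e00 - l1 * e33 + hl23
    rcases mul_eq_zero.mp hsq with hc1 | hc2
    · -- Kronecker case: contradiction
      exfalso
      apply hnotensor
      refine ⟨Equiv.refl _,
        (1/2 : ℝ) • !![N 0 0 + N 2 2, N 0 0 - N 2 2; N 0 0 - N 2 2, N 0 0 + N 2 2],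
        (1/(2 * N 0 0) : ℝ) • !![N 0 0 + N 1 1, N 0 0 - N 1 1; N 0 0 - N 1 1, N 0 0 + N 1 1],
        ?_, ?_, ?_⟩
      · ext i j; fin_cases i <;> fin_cases j <;>
          simp [Matrix.IsSymm, Matrix.vecHead, Matrix.vecTail]
      · ext i j; fin_cases i <;> fin_cases j <;>
          simp [Matrix.IsSymm, Matrix.vecHead, Matrix.vecTail]
      · intro i j
        have h33val : N 3 3 = N 1 1 * N 2 2 / N 0 0 := by
          field_simp
          linarith [hc1]
        rw [Equiv.refl_apply, Equiv.refl_apply, hMN, hNd, h33val, Matrix.mul_assoc]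
        fin_cases i <;> fin_cases j <;>
          (simp [kron4, K0, Matrix.mul_apply, Matrix.diagonal_mul, Fin.sum_univ_four,
            Matrix.vecHead, Matrix.vecTail]
           field_simp
           ring)
    · -- non-Kronecker diagonal case : u = v = 1
      refine ⟨1, 1, N 0 0, N 1 1 / N 0 0, N 2 2 / N 0 0, N 3 3 / N 0 0,
        by norm_num, hn1pos, ?_, ?_, ?_, ?_, ?_, ?_, ?_, ?_, ?_, ?_⟩
      · exact abs_pos.mpr (div_ne_zero hpne hn1ne)
      · have h2 : (N 1 1 / N 0 0)^2 < 1 := by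
          rw [div_pow, div_lt_one (by positivity)]
          calc N 1 1 ^ 2 = l2 := by rw [pow_two]; exact ep
            _ < l1 := hl12
            _ = N 0 0 ^ 2 := by rw [pow_two]; exact e00.symm
        simpa using h2
      · exact abs_pos.mpr (div_ne_zero hrne hn1ne)
      · have h2 : (N 2 2 / N 0 0)^2 < 1 := by
          rw [div_pow, div_lt_one (by positivity)]
          calc N 2 2 ^ 2 = l3 := by rw [pow_two]; exact er
            _ < l1 := hl13
            _ = N 0 0 ^ 2 := by rw [pow_two]; exact e00.symm
        simpa using h2
      · exact abs_pos.mpr (div_ne_zero hn4ne hn1ne)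
      · have h2 : (N 3 3 / N 0 0)^2 < 1 := by
          rw [div_pow, div_lt_one (by positivity)]
          calc N 3 3 ^ 2 = l4 := by rw [pow_two]; exact e33
            _ < l1 := hl14
            _ = N 0 0 ^ 2 := by rw [pow_two]; exact e00.symm
        simpa using h2
      · -- the matrix identity
        have hKid : ((1 / 2 : ℝ) • !![1, (1:ℝ), 1, 1; 1, -1, 1, -1; 1, 1, -1, -1; 1, -1, -1, 1]) = K0 := by
          norm_num [K0]
        have hD : (N 0 0) • Matrix.diagonal ![(1:ℝ), N 1 1 / N 0 0, N 2 2 / N 0 0, N 3 3 / N 0 0]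
            = Matrix.diagonal ![N 0 0, N 1 1, N 2 2, N 3 3] := by
          ext i j
          fin_cases i <;> fin_cases j <;>
            (simp [Matrix.diagonal_apply_eq, Matrix.diagonal_apply_ne,
              Matrix.vecHead, Matrix.vecTail]
             try field_simp)
        rw [hKid, K0_transpose, hD, ← hNd]
        exact hMN
      · intro _
        refine ⟨rfl, rfl, ?_⟩
        field_simp
        linear_combination hc2
      · intro hxy
        have hz : N 3 3 / N 0 0 = -((N 1 1 / N 0 0) * (N 2 2 / N 0 0)) := by
          field_simp
          linear_combination hc2
        rw [hz, ← hxy]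
        ring
      · intro hxy
        left
        have hz : N 3 3 / N 0 0 = -((N 1 1 / N 0 0) * (N 2 2 / N 0 0)) := by
          field_simp
          linear_combination hc2
        rw [hz, hxy]
        ring
  · -- q ≠ 0 : rotated case
    have hr' : N 2 2 = -(N 1 1) := by
      rcases mul_eq_zero.mp e12 with h | h
      · exact absurd h hq
      · linarith
    obtain ⟨ρ, hρ⟩ : ∃ x : ℝ, x = Real.sqrt (N 1 1 ^ 2 + N 1 2 ^ 2) := ⟨_, rfl⟩
    have hq2pos : 0 < N 1 2 ^ 2 := by
      rw [← sq_abs]; exact pow_pos (abs_pos.mpr hq) 2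
    have hsumpos : 0 < N 1 1 ^ 2 + N 1 2 ^ 2 :=
      add_pos_of_nonneg_of_pos (sq_nonneg _) hq2pos
    have hρpos : 0 < ρ := by rw [hρ]; exact Real.sqrt_pos.mpr hsumpos
    have hρne : ρ ≠ 0 := ne_of_gt hρpos
    have hρ2 : ρ ^ 2 = N 1 1 ^ 2 + N 1 2 ^ 2 := by
      rw [hρ]; exact Real.sq_sqrt (le_of_lt hsumpos)
    have hl2ρ : l2 = ρ ^ 2 := by linear_combination -e11 - hρ2
    have hl3ρ : l3 = ρ ^ 2 := by linear_combination -e22 - hρ2 + (N 2 2 - N 1 1) * hr'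
    have hn4sq : (N 0 0 * N 3 3 - ρ ^ 2) * (N 0 0 * N 3 3 + ρ ^ 2) = 0 := by
      linear_combination (N 3 3 * N 3 3) * e00 + l1 * e33 - hl23 + l3 * hl2ρ + ρ ^ 2 * hl3ρ
    -- construct the rotation parameters u, v
    obtain ⟨u, v, huv, hpuv, hquv, hneuv⟩ :
        ∃ u v : ℝ, u ^ 2 + v ^ 2 = 2 ∧ N 1 1 = ρ * u * v ∧ N 1 2 = ρ * (u ^ 2 - 1)
          ∧ u ^ 2 ≠ v ^ 2 := by
      by_cases hqρ : N 1 2 = -ρ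
      · have hp2z : N 1 1 ^ 2 = 0 := by
          rw [hqρ] at hρ2; linear_combination -hρ2
        have hp0 : N 1 1 = 0 := by
          have := sq_eq_zero_iff.mp hp2z; exact this
        refine ⟨0, Real.sqrt 2, ?_, ?_, ?_, ?_⟩
        · rw [Real.sq_sqrt (by norm_num : (2:ℝ) ≥ 0)]; norm_num
        · rw [hp0]; ring
        · rw [hqρ]; ring
        · rw [Real.sq_sqrt (by norm_num : (2:ℝ) ≥ 0)]; norm_num
      · have hqabs : N 1 2 ^ 2 ≤ ρ ^ 2 := by linarith [sq_nonneg (N 1 1)]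
        have hqlb : -ρ < N 1 2 := by
          have habs2 : |N 1 2| ≤ ρ := by
            rw [← Real.sqrt_sq (le_of_lt hρpos), ← Real.sqrt_sq_eq_abs]
            exact Real.sqrt_le_sqrt hqabs
          have hle : -ρ ≤ N 1 2 := by linarith [neg_abs_le (N 1 2)]
          exact lt_of_le_of_ne hle (fun h => hqρ h.symm)
        have hρq : 0 < ρ + N 1 2 := by linarith
        have h1q : 0 < 1 + N 1 2 / ρ := by
          have : 1 + N 1 2 / ρ = (ρ + N 1 2) / ρ := by field_simp
          rw [this]; positivity
        obtain ⟨u, hu⟩ : ∃ x : ℝ, x = Real.sqrt (1 + N 1 2 / ρ) := ⟨_, rfl⟩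
        have hupos : 0 < u := by rw [hu]; exact Real.sqrt_pos.mpr h1q
        have hune : u ≠ 0 := ne_of_gt hupos
        have hu2 : u ^ 2 = 1 + N 1 2 / ρ := by
          rw [hu]; exact Real.sq_sqrt (le_of_lt h1q)
        obtain ⟨v, hv⟩ : ∃ x : ℝ, x = N 1 1 / (ρ * u) := ⟨_, rfl⟩
        have hp2 : N 1 1 ^ 2 = (ρ - N 1 2) * (ρ + N 1 2) := by linear_combination -hρ2
        have hv2 : v ^ 2 = 1 - N 1 2 / ρ := by
          rw [hv, div_pow, mul_pow, hu2, hp2]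
          rw [div_eq_iff (by positivity)]
          field_simp
        refine ⟨u, v, ?_, ?_, ?_, ?_⟩
        · rw [hu2, hv2]; ring
        · rw [hv]; field_simp
        · rw [hu2]; field_simp; ring
        · rw [hu2, hv2]
          intro h
          have : N 1 2 / ρ = 0 := by linarith
          rw [div_eq_zero_iff] at this
          rcases this with h' | h'
          · exact hq h'
          · exact hρne h'
    have hxne : ρ / N 0 0 ≠ 0 := div_ne_zero hρne hn1ne
    have hx2lt : (ρ / N 0 0) ^ 2 < 1 := by
      rw [div_pow, div_lt_one (by positivity)]
      calc ρ ^ 2 = l2 := hl2ρ.symm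
        _ < l1 := hl12
        _ = N 0 0 ^ 2 := by rw [pow_two]; exact e00.symm
    refine ⟨u, v, N 0 0, ρ / N 0 0, -(ρ / N 0 0), N 3 3 / N 0 0, huv, hn1pos,
      ?_, ?_, ?_, ?_, ?_, ?_, ?_, ?_, ?_, ?_⟩
    · exact abs_pos.mpr hxne
    · simpa using hx2lt
    · rw [abs_neg]; exact abs_pos.mpr hxne
    · rw [abs_neg]; simpa using hx2lt
    · exact abs_pos.mpr (div_ne_zero hn4ne hn1ne)
    · have h2 : (N 3 3 / N 0 0) ^ 2 < 1 := by
        rw [div_pow, div_lt_one (by positivity)]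
        calc N 3 3 ^ 2 = l4 := by rw [pow_two]; exact e33
          _ < l1 := hl14
          _ = N 0 0 ^ 2 := by rw [pow_two]; exact e00.symm
      simpa using h2
    · -- the matrix identity
      obtain ⟨S, hSdef⟩ : ∃ X : Matrix (Fin 4) (Fin 4) ℝ,
          X = !![(1:ℝ),0,0,0; 0,(u+v)/2,(v-u)/2,0; 0,(u-v)/2,(u+v)/2,0; 0,0,0,1] := ⟨_, rfl⟩
      have hKS : ((1 / 2 : ℝ) • !![1, u, v, 1; 1, -v, u, -1; 1, v, -u, -1; 1, -u, -v, 1])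
          = K0 * S := by
        rw [hSdef]
        ext i j
        fin_cases i <;> fin_cases j <;>
          (simp [K0, Matrix.mul_apply, Fin.sum_univ_four, Matrix.vecHead, Matrix.vecTail]
           try ring)
      have hNmat : N = !![N 0 0,0,0,0; 0,N 1 1,N 1 2,0; 0,N 1 2,-(N 1 1),0; 0,0,0,N 3 3] := by
        ext i j
        fin_cases i <;> fin_cases j <;>
          simp [h01, h02, h03, h10, h20, h30, h13, h23, h31, h32, h21, hr',
            Matrix.vecHead, Matrix.vecTail]
      have hDdiag : (N 0 0) • Matrix.diagonal ![(1:ℝ), ρ / N 0 0, -(ρ / N 0 0), N 3 3 / N 0 0]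
          = Matrix.diagonal ![N 0 0, ρ, -ρ, N 3 3] := by
        ext i j
        fin_cases i <;> fin_cases j <;>
          (simp [Matrix.diagonal_apply_eq, Matrix.diagonal_apply_ne,
            Matrix.vecHead, Matrix.vecTail]
           try field_simp)
      have hSDS : S * ((N 0 0) • Matrix.diagonal ![(1:ℝ), ρ / N 0 0, -(ρ / N 0 0), N 3 3 / N 0 0]) * Sᵀ
          = !![N 0 0,0,0,0; 0,N 1 1,N 1 2,0; 0,N 1 2,-(N 1 1),0; 0,0,0,N 3 3] := by
        rw [hDdiag, hpuv, hquv, hSdef, Matrix.mul_assoc]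
        ext i j
        fin_cases i <;> fin_cases j <;>
          (simp [Matrix.mul_apply, Matrix.diagonal_mul, Fin.sum_univ_four,
            Matrix.transpose_apply, Matrix.vecHead, Matrix.vecTail]
           try ring
           try linear_combination (ρ / 2) * huv
           try linear_combination (-(ρ / 2)) * huv
           try linear_combination (ρ / 4) * huv
           try linear_combination (-(ρ / 4)) * huv
           try linear_combination ρ * huv
           try linear_combination (-ρ) * huv)
      rw [hKS, Matrix.transpose_mul, K0_transpose]
      rw [show K0 * S * (N 0 0 • Matrix.diagonal ![(1:ℝ), ρ / N 0 0, -(ρ / N 0 0), N 3 3 / N 0 0]) * (Sᵀ * K0)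
          = K0 * (S * (N 0 0 • Matrix.diagonal ![(1:ℝ), ρ / N 0 0, -(ρ / N 0 0), N 3 3 / N 0 0]) * Sᵀ) * K0 by
        simp only [Matrix.mul_assoc]]
      rw [hSDS, ← hNmat]
      exact hMN
    · intro habs
      exact absurd (abs_neg (ρ / N 0 0)).symm habs
    · intro hxy
      exfalso
      have hxpos : 0 < ρ / N 0 0 := div_pos hρpos hn1pos
      have : ρ / N 0 0 = -(ρ / N 0 0) := hxy
      linarith
    · intro _
      rcases mul_eq_zero.mp hn4sq with h | h
      · left
        field_simp
        try linear_combination N 0 0 * h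
        try linear_combination (-(N 0 0)) * h
        linear_combination h
      · right
        constructor
        · field_simp
          try linear_combination N 0 0 * h
          try linear_combination (-(N 0 0)) * h
          linear_combination h
        · intro habs
          apply hneuv
          rw [← sq_abs u, ← sq_abs v, habs]
end

section
/- Let n be an odd positive integer, let H = (1/√2)·[[1,1],[1,−1]], and let λ₁', λ₂', μ₁', μ₂' ∈ ℝ. Suppose M is a 4×4 real symmetric matrix with Mⁿ = (H·diag(λ₁',λ₂')·Hᵀ) ⊗ (H·diag(μ₁',μ₂')·Hᵀ). Then M = (H·diag(λ₁,λ₂)·Hᵀ) ⊗ (H·diag(μ₁,μ₂)·Hᵀ), where λᵢ is the unique real number with λᵢⁿ = λᵢ' and μᵢ is the unique real number with μᵢⁿ = μᵢ'. In particular, M = A⊗B for 2×2 real symmetric matrices A, B with A₁₁ = A₂₂ and B₁₁ = B₂₂. -/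
open Matrix Polynomial

noncomputable def oddRoot (n : ℕ) (x : ℝ) : ℝ :=
  if 0 ≤ x then x ^ ((n : ℝ)⁻¹) else -((-x) ^ ((n : ℝ)⁻¹))

lemma oddRoot_pow {n : ℕ} (hodd : Odd n) (hpos : 0 < n) (x : ℝ) :
    oddRoot n x ^ n = x := by
  unfold oddRoot
  split_ifs with h
  · exact Real.rpow_inv_natCast_pow h hpos.ne'
  · rw [hodd.neg_pow, Real.rpow_inv_natCast_pow (by linarith) hpos.ne', neg_neg]

lemma oddRoot_pow_self {n : ℕ} (hodd : Odd n) (hpos : 0 < n) (y : ℝ) :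
    oddRoot n (y ^ n) = y :=
  (Odd.strictMono_pow (R := ℝ) hodd).injective (oddRoot_pow hodd hpos (y ^ n))

noncomputable def conjAlgHom {m : Type*} [Fintype m] [DecidableEq m]
    (U : Matrix m m ℝ) (hU : U ∈ Matrix.unitaryGroup m ℝ) :
    Matrix m m ℝ →ₐ[ℝ] Matrix m m ℝ where
  toFun A := U * A * star U
  map_one' := by
    show U * 1 * star U = 1
    rw [mul_one]; exact Matrix.mem_unitaryGroup_iff.mp hU
  map_mul' A B := by
    have h : star U * U = 1 := Matrix.mem_unitaryGroup_iff'.mp hU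
    simp only [Matrix.mul_assoc]
    rw [← Matrix.mul_assoc (star U) U (B * star U), h, Matrix.one_mul]
  map_zero' := by simp
  map_add' A B := by noncomm_ring
  commutes' r := by
    have h : U * star U = 1 := Matrix.mem_unitaryGroup_iff.mp hU
    simp only [Algebra.algebraMap_eq_smul_one, Matrix.mul_smul, Matrix.smul_mul,
      Matrix.mul_one, h]

lemma aeval_diagonal {m : Type*} [Fintype m] [DecidableEq m]
    (v : m → ℝ) (p : ℝ[X]) :
    aeval (Matrix.diagonal v) p = Matrix.diagonal (fun i => p.eval (v i)) := by
  have h1 : Matrix.diagonal v = Matrix.diagonalAlgHom ℝ v := rfl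
  rw [h1, aeval_algHom_apply]
  have h2 : (aeval v p : m → ℝ) = fun i => p.eval (v i) := by
    funext i
    have := (aeval_algHom_apply (Pi.evalAlgHom ℝ (fun _ : m => ℝ) i) v p).symm
    simp only [Pi.evalAlgHom_apply] at this
    rw [this, ← Polynomial.coe_aeval_eq_eval]
  rw [h2]
  rfl

lemma isHermitian_pow_inj {m : Type*} [Fintype m] [DecidableEq m]
    {n : ℕ} (hodd : Odd n) (hpos : 0 < n)
    {P Q : Matrix m m ℝ} (hP : P.IsHermitian) (hQ : Q.IsHermitian)
    (h : P ^ n = Q ^ n) : P = Q := by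
  classical
  set s : Finset ℝ :=
    (Finset.univ.image fun i => hP.eigenvalues i ^ n) ∪
    (Finset.univ.image fun i => hQ.eigenvalues i ^ n) with hs
  set p : ℝ[X] := Lagrange.interpolate s id (oddRoot n) with hp
  have key : ∀ (R : Matrix m m ℝ) (hR : R.IsHermitian),
      (∀ i, hR.eigenvalues i ^ n ∈ s) → aeval (R ^ n) p = R := by
    intro R hR hmem
    have hU : (hR.eigenvectorUnitary : Matrix m m ℝ) ∈ Matrix.unitaryGroup m ℝ :=
      hR.eigenvectorUnitary.2
    have hRd : R = conjAlgHom _ hU (Matrix.diagonal hR.eigenvalues) := by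
      have h0 := hR.spectral_theorem
      simpa [conjAlgHom] using h0
    rw [hRd, ← map_pow, Matrix.diagonal_pow, aeval_algHom_apply, aeval_diagonal]
    have hfun : (fun i => eval ((hR.eigenvalues ^ n : m → ℝ) i) p) = hR.eigenvalues := by
      funext i
      simp only [Pi.pow_apply, hp]
      have := Lagrange.eval_interpolate_at_node (oddRoot n) (Set.injOn_id _)
        (hmem i)
      simp only [id] at this
      rw [this, oddRoot_pow_self hodd hpos]
    rw [hfun]
  have hPm : ∀ i, hP.eigenvalues i ^ n ∈ s := fun i =>
    Finset.mem_union_left _ (Finset.mem_image_of_mem _ (Finset.mem_univ i))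
  have hQm : ∀ i, hQ.eigenvalues i ^ n ∈ s := fun i =>
    Finset.mem_union_right _ (Finset.mem_image_of_mem _ (Finset.mem_univ i))
  rw [← key P hP hPm, h, key Q hQ hQm]

lemma kron_eq (H : Matrix (Fin 2) (Fin 2) ℝ)
    (hH : H = (Real.sqrt 2)⁻¹ • !![1, 1; 1, -1]) (a b c d : ℝ) :
    kron4 (H * Matrix.diagonal ![a, b] * Hᵀ) (H * Matrix.diagonal ![c, d] * Hᵀ)
      = kron4 H H * Matrix.diagonal ![a*c, a*d, b*c, b*d] * (kron4 H H)ᵀ := by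
  subst hH
  ext i j
  fin_cases i <;> fin_cases j <;>
    · norm_num [kron4, Matrix.mul_apply, Fin.sum_univ_succ,
        Matrix.diagonal_apply, Matrix.vecMul_diagonal,
        Matrix.vecHead, Matrix.vecTail]
      ring

lemma W_mem (H : Matrix (Fin 2) (Fin 2) ℝ)
    (hH : H = (Real.sqrt 2)⁻¹ • !![1, 1; 1, -1]) :
    kron4 H H ∈ Matrix.unitaryGroup (Fin 4) ℝ := by
  rw [Matrix.mem_unitaryGroup_iff]
  have h2 : Real.sqrt 2 * Real.sqrt 2 = 2 := Real.mul_self_sqrt (by norm_num)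
  have h2' : Real.sqrt 2 ≠ 0 := by positivity
  subst hH
  ext i j
  fin_cases i <;> fin_cases j <;>
    norm_num [kron4, Matrix.mul_apply, Fin.sum_univ_succ, Matrix.one_apply,
      Matrix.star_apply, Matrix.vecHead, Matrix.vecTail, Fin.ext_iff] <;>
    (field_simp <;> ring_nf <;> nlinarith [h2])

/-- Let `n` be an odd positive integer, `H = (1/√2)·[[1,1],[1,−1]]`, and let
`M` be a `4 × 4` real symmetric matrix with
`Mⁿ = (H·diag(λ₁',λ₂')·Hᵀ) ⊗ (H·diag(μ₁',μ₂')·Hᵀ)`.  Then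
`M = (H·diag(λ₁,λ₂)·Hᵀ) ⊗ (H·diag(μ₁,μ₂)·Hᵀ)` where `λᵢⁿ = λᵢ'` and
`μᵢⁿ = μᵢ'`; in particular `M = A ⊗ B` for `2 × 2` real symmetric matrices
`A`, `B` with `A₁₁ = A₂₂` and `B₁₁ = B₂₂`. -/
theorem statement14 (n : ℕ) (hodd : Odd n) (hpos : 0 < n)
    (H : Matrix (Fin 2) (Fin 2) ℝ) (hH : H = (Real.sqrt 2)⁻¹ • !![1, 1; 1, -1])
    (lam₁' lam₂' mu₁' mu₂' : ℝ)
    (M : Matrix (Fin 4) (Fin 4) ℝ) (hMs : M.IsSymm)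
    (hMn : M ^ n = kron4 (H * Matrix.diagonal ![lam₁', lam₂'] * Hᵀ)
                         (H * Matrix.diagonal ![mu₁', mu₂'] * Hᵀ)) :
    ∃ lam₁ lam₂ mu₁ mu₂ : ℝ,
      lam₁ ^ n = lam₁' ∧ lam₂ ^ n = lam₂' ∧ mu₁ ^ n = mu₁' ∧ mu₂ ^ n = mu₂' ∧
      M = kron4 (H * Matrix.diagonal ![lam₁, lam₂] * Hᵀ)
                (H * Matrix.diagonal ![mu₁, mu₂] * Hᵀ) ∧
      (H * Matrix.diagonal ![lam₁, lam₂] * Hᵀ).IsSymm ∧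
      (H * Matrix.diagonal ![mu₁, mu₂] * Hᵀ).IsSymm ∧
      (H * Matrix.diagonal ![lam₁, lam₂] * Hᵀ) 0 0 =
        (H * Matrix.diagonal ![lam₁, lam₂] * Hᵀ) 1 1 ∧
      (H * Matrix.diagonal ![mu₁, mu₂] * Hᵀ) 0 0 =
        (H * Matrix.diagonal ![mu₁, mu₂] * Hᵀ) 1 1 := by
  have hsymm : ∀ v : Fin 2 → ℝ, (H * Matrix.diagonal v * Hᵀ).IsSymm := by
    intro v
    rw [Matrix.IsSymm, Matrix.transpose_mul, Matrix.transpose_mul,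
      Matrix.transpose_transpose, Matrix.diagonal_transpose, Matrix.mul_assoc]
  have hentry : ∀ v : Fin 2 → ℝ,
      (H * Matrix.diagonal v * Hᵀ) 0 0 = (H * Matrix.diagonal v * Hᵀ) 1 1 := by
    intro v
    rw [hH]
    norm_num [Matrix.mul_apply, Fin.sum_univ_succ, Matrix.diagonal_apply,
      Matrix.vecMul_diagonal, Matrix.vecHead, Matrix.vecTail]
  set W := kron4 H H with hWdef
  have hW : W ∈ Matrix.unitaryGroup (Fin 4) ℝ := W_mem H hH
  have hstarW : star W = Wᵀ := Matrix.conjTranspose_eq_transpose_of_trivial W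
  set lam₁ := oddRoot n lam₁' with hl1
  set lam₂ := oddRoot n lam₂' with hl2
  set mu₁ := oddRoot n mu₁' with hm1
  set mu₂ := oddRoot n mu₂' with hm2
  have h1 : lam₁ ^ n = lam₁' := oddRoot_pow hodd hpos _
  have h2 : lam₂ ^ n = lam₂' := oddRoot_pow hodd hpos _
  have h3 : mu₁ ^ n = mu₁' := oddRoot_pow hodd hpos _
  have h4 : mu₂ ^ n = mu₂' := oddRoot_pow hodd hpos _
  set N := kron4 (H * Matrix.diagonal ![lam₁, lam₂] * Hᵀ)
                 (H * Matrix.diagonal ![mu₁, mu₂] * Hᵀ) with hNdef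
  have hN : N = W * Matrix.diagonal ![lam₁*mu₁, lam₁*mu₂, lam₂*mu₁, lam₂*mu₂] * Wᵀ :=
    kron_eq H hH lam₁ lam₂ mu₁ mu₂
  have hconj : ∀ D : Matrix (Fin 4) (Fin 4) ℝ,
      W * D * Wᵀ = conjAlgHom W hW D := by
    intro D; rw [← hstarW]; rfl
  have herm_of_symm : ∀ A : Matrix (Fin 4) (Fin 4) ℝ, A.IsSymm → A.IsHermitian := by
    intro A hA
    rw [Matrix.IsHermitian, Matrix.conjTranspose_eq_transpose_of_trivial]
    exact hA
  have hNsymm : N.IsSymm := by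
    rw [Matrix.IsSymm, hN, Matrix.transpose_mul, Matrix.transpose_mul,
      Matrix.transpose_transpose, Matrix.diagonal_transpose, Matrix.mul_assoc]
  have hNn : N ^ n = M ^ n := by
    rw [hN, hMn, kron_eq H hH lam₁' lam₂' mu₁' mu₂', hconj, hconj, ← map_pow,
      Matrix.diagonal_pow]
    have : (![lam₁*mu₁, lam₁*mu₂, lam₂*mu₁, lam₂*mu₂] ^ n : Fin 4 → ℝ)
        = ![lam₁'*mu₁', lam₁'*mu₂', lam₂'*mu₁', lam₂'*mu₂'] := by
      funext i
      fin_cases i <;>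
        simp [Pi.pow_apply, mul_pow, h1, h2, h3, h4]
    rw [this]
  have hMN : M = N :=
    isHermitian_pow_inj hodd hpos (herm_of_symm M hMs) (herm_of_symm N hNsymm)
      hNn.symm
  exact ⟨lam₁, lam₂, mu₁, mu₂, h1, h2, h3, h4, hMN, hsymm _, hsymm _,
    hentry _, hentry _⟩
end
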